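/- arXiv:1412.3518 — 2 statements merged into one kernel-verified Lean document; each statement's English description precedes it below -/
import Mathlib

section
/- In the extended Spohn model obtained by adding binary variables D and E with equations D = ¬S ∧ A, E = S ∧ B, C = D ∨ E (A, B, S set by the context), in the context u where A = B = S = 1: A = 1 is not an actual cause of C = 1, while B = 1 and S = 1 are actual causes of C = 1, according to the HP definition. -/
open Classical

/-- A causal model over variable namespace ℕ (values are also coded as ℕ).
`V` is the finite set of endogenous variables; `F X ctx g` gives the value of the
structural equation for `X` given a context `ctx` (assignment to the exogenous
variables) and an assignment `g` to the endogenous variables. -/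
structure CM where
  V : Finset ℕ
  F : ℕ → (ℕ → ℕ) → (ℕ → ℕ) → ℕ

/-- `v` is a solution of all the structural equations of `M` in context `ctx`
(pinned to `0` outside `V` so that worlds are canonical). -/
def IsSol (M : CM) (ctx v : ℕ → ℕ) : Prop :=
  (∀ X ∈ M.V, v X = M.F X ctx v) ∧ ∀ X, X ∉ M.V → v X = 0

/-- `M` is recursive (acyclic): there is a total order on `V` such that each
equation depends only on strictly earlier endogenous variables. -/
def Recursive (M : CM) : Prop :=
  ∃ ord : ℕ → ℕ, Set.InjOn ord ↑M.V ∧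
    ∀ X ∈ M.V, ∀ ctx g h, (∀ Y ∈ M.V, ord Y < ord X → g Y = h Y) →
      M.F X ctx g = M.F X ctx h

/-- The model obtained by intervening according to the partial assignment `I`. -/
def CM.intervene (M : CM) (I : ℕ → Option ℕ) : CM :=
  ⟨M.V, fun X ctx g => (I X).getD (M.F X ctx g)⟩

/-- The intervention setting the variables in `S` to the values given by `f`. -/
def doSet (S : Finset ℕ) (f : ℕ → ℕ) : ℕ → Option ℕ :=
  fun Y => if Y ∈ S then some (f Y) else none

/-- `(M, ctx) ⊨ [I](X = x)`. -/
def Sat (M : CM) (ctx : ℕ → ℕ) (I : ℕ → Option ℕ) (X x : ℕ) : Prop :=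
  ∀ v, IsSol (M.intervene I) ctx v → v X = x

/-- Boolean combinations of primitive events `X = x`. -/
inductive BForm where
  | prim : ℕ → ℕ → BForm
  | not : BForm → BForm
  | and : BForm → BForm → BForm

def BForm.eval (v : ℕ → ℕ) : BForm → Prop
  | .prim X x => v X = x
  | .not φ => ¬ BForm.eval v φ
  | .and φ ψ => BForm.eval v φ ∧ BForm.eval v ψ

def BForm.vars : BForm → Finset ℕ
  | .prim X _ => {X}
  | .not φ => φ.vars
  | .and φ ψ => φ.vars ∪ ψ.vars

/-- `(M, ctx) ⊨ [I]φ`. -/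
def SatF (M : CM) (ctx : ℕ → ℕ) (I : ℕ → Option ℕ) (φ : BForm) : Prop :=
  ∀ v, IsSol (M.intervene I) ctx v → φ.eval v

/-- `M'` is a conservative extension of `M`: same exogenous variables (shared
namespace), `M.V ⊆ M'.V`, and for every context, every `X ∈ M.V`, and every
setting of the other variables of `M`, the intervened value of `X` agrees. -/
def ConsExt (M M' : CM) : Prop :=
  M.V ⊆ M'.V ∧
  ∀ ctx x, ∀ X ∈ M.V, ∀ w : ℕ → ℕ,
    (Sat M ctx (doSet (M.V.erase X) w) X x ↔ Sat M' ctx (doSet (M.V.erase X) w) X x)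

/-- The intervention `X⃗ ← x⃗', W⃗ ← w⃗` used in AC2(a). -/
def witI (Xs : Finset ℕ) (x' : ℕ → ℕ) (W : Finset ℕ) (w : ℕ → ℕ) : ℕ → Option ℕ :=
  fun Y => if Y ∈ Xs then some (x' Y) else if Y ∈ W then some (w Y) else none

/-- The intervention `X⃗ ← x⃗, Z⃗' ← z⃗, W⃗' ← w⃗` used in AC2(b) (here `vs` is the
actual solution, providing the actual values `z⃗`). -/
def acbI (Xs : Finset ℕ) (xv : ℕ → ℕ) (Z' : Finset ℕ) (vs : ℕ → ℕ)
    (W' : Finset ℕ) (w : ℕ → ℕ) : ℕ → Option ℕ :=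
  fun Y => if Y ∈ Xs then some (xv Y) else if Y ∈ Z' then some (vs Y)
    else if Y ∈ W' then some (w Y) else none

/-- `(W, w, x')` is a witness for AC2 (updated version, with AC2(b)). -/
def Wit (M : CM) (ctx : ℕ → ℕ) (Xs : Finset ℕ) (xv : ℕ → ℕ) (φ : BForm)
    (W : Finset ℕ) (w x' : ℕ → ℕ) : Prop :=
  W ⊆ M.V ∧ Xs ⊆ M.V \ W ∧
  SatF M ctx (witI Xs x' W w) (BForm.not φ) ∧
  ∀ vs, IsSol M ctx vs → ∀ W' ⊆ W, ∀ Z' ⊆ M.V \ W,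
    SatF M ctx (acbI Xs xv Z' vs W' w) φ

/-- `(W, w, x')` is a witness for AC2 in the original HP sense (with AC2(b'):
only `W` itself, not its subsets, is set to `w`). -/
def Wit' (M : CM) (ctx : ℕ → ℕ) (Xs : Finset ℕ) (xv : ℕ → ℕ) (φ : BForm)
    (W : Finset ℕ) (w x' : ℕ → ℕ) : Prop :=
  W ⊆ M.V ∧ Xs ⊆ M.V \ W ∧
  SatF M ctx (witI Xs x' W w) (BForm.not φ) ∧
  ∀ vs, IsSol M ctx vs → ∀ Z' ⊆ M.V \ W,
    SatF M ctx (acbI Xs xv Z' vs W w) φ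

/-- AC1: `X⃗ = x⃗` and `φ` hold in the actual world. -/
def AC1 (M : CM) (ctx : ℕ → ℕ) (Xs : Finset ℕ) (xv : ℕ → ℕ) (φ : BForm) : Prop :=
  ∀ v, IsSol M ctx v → (∀ X ∈ Xs, v X = xv X) ∧ φ.eval v

def PreCause (M : CM) (ctx : ℕ → ℕ) (Xs : Finset ℕ) (xv : ℕ → ℕ) (φ : BForm) : Prop :=
  AC1 M ctx Xs xv φ ∧ ∃ W w x', Wit M ctx Xs xv φ W w x'

/-- The (updated) HP definition of actual cause: AC1 ∧ AC2 ∧ AC3. -/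
def IsCause (M : CM) (ctx : ℕ → ℕ) (Xs : Finset ℕ) (xv : ℕ → ℕ) (φ : BForm) : Prop :=
  PreCause M ctx Xs xv φ ∧ ∀ Xs' ⊂ Xs, ¬ PreCause M ctx Xs' xv φ

def PreCause' (M : CM) (ctx : ℕ → ℕ) (Xs : Finset ℕ) (xv : ℕ → ℕ) (φ : BForm) : Prop :=
  AC1 M ctx Xs xv φ ∧ ∃ W w x', Wit' M ctx Xs xv φ W w x'

/-- The original HP definition of actual cause (with AC2(b')). -/
def IsCause' (M : CM) (ctx : ℕ → ℕ) (Xs : Finset ℕ) (xv : ℕ → ℕ) (φ : BForm) : Prop :=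
  PreCause' M ctx Xs xv φ ∧ ∀ Xs' ⊂ Xs, ¬ PreCause' M ctx Xs' xv φ

/-- An extended causal model: a causal model with a normality preorder on worlds. -/
structure ECM extends CM where
  normGE : (ℕ → ℕ) → (ℕ → ℕ) → Prop
  normGE_refl : ∀ s, normGE s s
  normGE_trans : ∀ s t u, normGE s t → normGE t u → normGE s u

/-- A world of `M`: an assignment to the endogenous variables (canonically `0` elsewhere). -/
def World (M : CM) (s : ℕ → ℕ) : Prop := ∀ X, X ∉ M.V → s X = 0

/-- The world determined by the intervention `I` in context `ctx` is at least as
normal as the actual world `s_ctx`. -/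
def NormAbove (M : ECM) (ctx : ℕ → ℕ) (I : ℕ → Option ℕ) : Prop :=
  ∀ s su, IsSol (M.toCM.intervene I) ctx s → IsSol M.toCM ctx su → M.normGE s su

/-- Witness for the extended HP definition: AC2 together with AC2(a⁺). -/
def EWit (M : ECM) (ctx : ℕ → ℕ) (Xs : Finset ℕ) (xv : ℕ → ℕ) (φ : BForm)
    (W : Finset ℕ) (w x' : ℕ → ℕ) : Prop :=
  Wit M.toCM ctx Xs xv φ W w x' ∧ NormAbove M ctx (witI Xs x' W w)

def EPreCause (M : ECM) (ctx : ℕ → ℕ) (Xs : Finset ℕ) (xv : ℕ → ℕ) (φ : BForm) : Prop :=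
  AC1 M.toCM ctx Xs xv φ ∧ ∃ W w x', EWit M ctx Xs xv φ W w x'

/-- The extended (normality-sensitive) HP definition of actual cause. -/
def EIsCause (M : ECM) (ctx : ℕ → ℕ) (Xs : Finset ℕ) (xv : ℕ → ℕ) (φ : BForm) : Prop :=
  EPreCause M ctx Xs xv φ ∧ ∀ Xs' ⊂ Xs, ¬ EPreCause M ctx Xs' xv φ

/-- In world `s`, variable `v0` takes on a value other than that specified by
the equations of `M` in context `ctx`. -/
def Deviates (M : CM) (ctx : ℕ → ℕ) (v0 : ℕ) (s : ℕ → ℕ) : Prop :=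
  ∀ v, IsSol (M.intervene (doSet (M.V.erase v0) s)) ctx v → v v0 ≠ s v0

/-- `(M, ctx)` respects the equations for `v0`: any world in which `v0` deviates
from its equation-determined value is not at least as normal as the actual world. -/
def Respects (M : ECM) (ctx : ℕ → ℕ) (v0 : ℕ) : Prop :=
  ∀ s, World M.toCM s → Deviates M.toCM ctx v0 s →
    ∀ su, IsSol M.toCM ctx su → ¬ M.normGE s su

/-- Conservative extension of extended causal models: conservative extension of
the underlying models plus condition CE on the normality preorders. -/
def EConsExt (M M' : ECM) : Prop :=
  ConsExt M.toCM M'.toCM ∧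
  ∀ ctx (W : Finset ℕ), W ⊆ M.V → ∀ w : ℕ → ℕ,
    (NormAbove M ctx (doSet W w) ↔ NormAbove M' ctx (doSet W w))

/-- Indicator of a proposition, used to express Boolean structural equations. -/
noncomputable def bI (p : Prop) : ℕ := if p then 1 else 0

/-- The extended Spohn model: A = 0, B = 1, S = 2, C = 3, D = 4, E = 5;
D = ¬S ∧ A, E = S ∧ B, C = D ∨ E. -/
noncomputable def MSp2 : CM :=
  ⟨{0, 1, 2, 3, 4, 5}, fun X ctx g =>
    if X = 4 then bI (g 2 = 0 ∧ g 0 = 1)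
    else if X = 5 then bI (g 2 = 1 ∧ g 1 = 1)
    else if X = 3 then bI (g 4 = 1 ∨ g 5 = 1)
    else ctx X⟩

/-! ### Auxiliary machinery for the Spohn model -/

noncomputable def spA (I : ℕ → Option ℕ) : ℕ := (I 0).getD 1
noncomputable def spB (I : ℕ → Option ℕ) : ℕ := (I 1).getD 1
noncomputable def spS (I : ℕ → Option ℕ) : ℕ := (I 2).getD 1
noncomputable def spD (I : ℕ → Option ℕ) : ℕ := (I 4).getD (bI (spS I = 0 ∧ spA I = 1))
noncomputable def spE (I : ℕ → Option ℕ) : ℕ := (I 5).getD (bI (spS I = 1 ∧ spB I = 1))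
noncomputable def spC (I : ℕ → Option ℕ) : ℕ := (I 3).getD (bI (spD I = 1 ∨ spE I = 1))

noncomputable def spSol (I : ℕ → Option ℕ) : ℕ → ℕ := fun X =>
  if X = 0 then spA I else if X = 1 then spB I else if X = 2 then spS I
  else if X = 3 then spC I else if X = 4 then spD I else if X = 5 then spE I else 0

lemma bI_true {p : Prop} (h : p) : bI p = 1 := by simp [bI, h]
lemma bI_false {p : Prop} (h : ¬ p) : bI p = 0 := by simp [bI, h]
lemma bI_eq_one {p : Prop} : bI p = 1 ↔ p := by by_cases h : p <;> simp [bI, h]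

lemma spSol_isSol (I : ℕ → Option ℕ) :
    IsSol (MSp2.intervene I) (fun _ => 1) (spSol I) := by
  constructor
  · intro X hX
    simp only [MSp2, CM.intervene, Finset.mem_insert, Finset.mem_singleton] at hX ⊢
    rcases hX with rfl | rfl | rfl | rfl | rfl | rfl <;>
      simp [spSol, spA, spB, spS, spD, spE, spC]
  · intro X hX
    simp only [MSp2, CM.intervene, Finset.mem_insert, Finset.mem_singleton, not_or] at hX
    obtain ⟨h0, h1, h2, h3, h4, h5⟩ := hX
    simp [spSol, h0, h1, h2, h3, h4, h5]

lemma spSol_uniq (I : ℕ → Option ℕ) (v : ℕ → ℕ)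
    (h : IsSol (MSp2.intervene I) (fun _ => 1) v) : v = spSol I := by
  obtain ⟨he, ho⟩ := h
  have h0 : v 0 = spA I := by
    have := he 0 (by simp [CM.intervene, MSp2]); simpa [CM.intervene, MSp2, spA] using this
  have h1 : v 1 = spB I := by
    have := he 1 (by simp [CM.intervene, MSp2]); simpa [CM.intervene, MSp2, spB] using this
  have h2 : v 2 = spS I := by
    have := he 2 (by simp [CM.intervene, MSp2]); simpa [CM.intervene, MSp2, spS] using this
  have h4 : v 4 = spD I := by
    have := he 4 (by simp [CM.intervene, MSp2])
    simpa [CM.intervene, MSp2, spD, h0, h2] using this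
  have h5 : v 5 = spE I := by
    have := he 5 (by simp [CM.intervene, MSp2])
    simpa [CM.intervene, MSp2, spE, h1, h2] using this
  have h3 : v 3 = spC I := by
    have := he 3 (by simp [CM.intervene, MSp2])
    simpa [CM.intervene, MSp2, spC, h4, h5] using this
  funext X
  by_cases hx : X ∈ MSp2.V
  · simp only [MSp2, Finset.mem_insert, Finset.mem_singleton] at hx
    rcases hx with rfl | rfl | rfl | rfl | rfl | rfl <;>
      simp [spSol, h0, h1, h2, h3, h4, h5]
  · rw [ho X hx]
    simp only [MSp2, Finset.mem_insert, Finset.mem_singleton, not_or] at hx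
    obtain ⟨g0, g1, g2, g3, g4, g5⟩ := hx
    simp [spSol, g0, g1, g2, g3, g4, g5]

lemma satF_iff (I : ℕ → Option ℕ) (φ : BForm) :
    SatF MSp2 (fun _ => 1) I φ ↔ φ.eval (spSol I) := by
  constructor
  · intro h; exact h _ (spSol_isSol I)
  · intro h v hv; rw [spSol_uniq I v hv]; exact h

lemma isSol_iff_none (v : ℕ → ℕ) :
    IsSol MSp2 (fun _ => 1) v ↔ IsSol (MSp2.intervene (fun _ => none)) (fun _ => 1) v := by
  simp [IsSol, CM.intervene]

lemma actual_uniq (v : ℕ → ℕ) (h : IsSol MSp2 (fun _ => 1) v) :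
    v = spSol (fun _ => none) :=
  spSol_uniq _ v ((isSol_iff_none v).1 h)

lemma actual_isSol : IsSol MSp2 (fun _ => 1) (spSol (fun _ => none)) :=
  (isSol_iff_none _).2 (spSol_isSol _)

lemma actual_vals : spSol (fun _ => none) 0 = 1 ∧ spSol (fun _ => none) 1 = 1 ∧
    spSol (fun _ => none) 2 = 1 ∧ spSol (fun _ => none) 3 = 1 ∧
    spSol (fun _ => none) 4 = 0 ∧ spSol (fun _ => none) 5 = 1 := by
  have hD : spD (fun _ => none) = 0 := by
    simp [spD, spS, spA]; exact bI_false (by simp)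
  have hE : spE (fun _ => none) = 1 := by
    simp [spE, spS, spB]; exact bI_true (by simp)
  have hC : spC (fun _ => none) = 1 := by
    simp [spC]; exact bI_true (by simp [hE])
  refine ⟨?_, ?_, ?_, ?_, ?_, ?_⟩ <;> simp [spSol, spA, spB, spS, hD, hE, hC]

/-- With an empty cause set, the witness intervention and the AC2(b) intervention
(with `W' = W`, `Z' = ∅`) coincide, so `Wit` for `∅` is contradictory. -/
lemma no_precause_empty (xv : ℕ → ℕ) (φ : BForm) :
    ¬ PreCause MSp2 (fun _ => 1) ∅ xv φ := by
  rintro ⟨-, W, w, x', hW, -, hna, hb⟩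
  have key : witI ∅ x' W w = acbI ∅ xv ∅ (spSol (fun _ => none)) W w := by
    funext Y; simp [witI, acbI]
  have h1 := (satF_iff _ _).1 hna
  have h2 := (satF_iff _ _).1
    (hb _ actual_isSol W (le_refl W) ∅ (Finset.empty_subset _))
  rw [key] at h1
  exact h1 h2

/-- in the extended Spohn model, in the context with A = B = S = 1,
A = 1 is not an actual cause of C = 1, while B = 1 and S = 1 are. -/
theorem spohn_extended :
    ¬ IsCause MSp2 (fun _ => 1) {0} (fun _ => 1) (.prim 3 1) ∧
    IsCause MSp2 (fun _ => 1) {1} (fun _ => 1) (.prim 3 1) ∧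
    IsCause MSp2 (fun _ => 1) {2} (fun _ => 1) (.prim 3 1) := by
  obtain ⟨a0, a1, a2, a3, a4, a5⟩ := actual_vals
  set vs := spSol (fun _ => none) with hvs
  have ac1 : ∀ (Xs : Finset ℕ), Xs ⊆ MSp2.V →
      (∀ X ∈ Xs, vs X = 1) →
      AC1 MSp2 (fun _ => 1) Xs (fun _ => 1) (.prim 3 1) := by
    intro Xs _ hx v hv
    rw [actual_uniq v hv]
    exact ⟨hx, a3⟩
  have minimal : ∀ x : ℕ, ∀ Xs' ⊂ ({x} : Finset ℕ),
      ¬ PreCause MSp2 (fun _ => 1) Xs' (fun _ => 1) (.prim 3 1) := by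
    intro x Xs' hss
    rw [Finset.ssubset_singleton_iff.1 hss]
    exact no_precause_empty _ _
  refine ⟨?_, ?_, ?_⟩
  · -- A = 1 is not a cause
    rintro ⟨⟨-, W, w, x', hW, hXW, hna, hb⟩, -⟩
    have hna' := (satF_iff _ _).1 hna
    simp only [BForm.eval] at hna'
    by_cases h3 : 3 ∈ W
    · -- C is pinned by w; AC2(b) forces w 3 = 1, contradicting AC2(a)
      have h2 := (satF_iff _ _).1
        (hb vs actual_isSol W (le_refl W) ∅ (Finset.empty_subset _))
      simp only [BForm.eval] at h2
      have e2 : spSol (acbI {0} (fun _ => 1) ∅ vs W w) 3 = w 3 := by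
        simp [spSol, spC, acbI, h3]
      have e1 : spSol (witI {0} x' W w) 3 = w 3 := by
        simp [spSol, spC, witI, h3]
      rw [e2] at h2; rw [e1] at hna'; exact hna' h2
    · -- C computed by its equation; freeze D at its actual value 0
      set J := witI {0} x' W w with hJ
      have hJ3 : J 3 = none := by simp [hJ, witI, h3]
      have hCJ : ¬ (spD J = 1 ∨ spE J = 1) := by
        intro hde
        exact hna' (by simp [spSol, spC, hJ3, bI_true hde])
      set Z' : Finset ℕ := if 4 ∈ W then ∅ else {4} with hZ'
      have hZsub : Z' ⊆ MSp2.V \ W := by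
        intro y hy
        rw [hZ'] at hy
        split at hy
        · exact absurd hy (by simp)
        · simp only [Finset.mem_singleton] at hy
          subst hy
          simp [MSp2, Finset.mem_sdiff, *]
      have h2 := (satF_iff _ _).1 (hb vs actual_isSol W (le_refl W) Z' hZsub)
      simp only [BForm.eval] at h2
      set K := acbI {0} (fun _ => 1) Z' vs W w with hK
      have hZ4 : ∀ y, y ∈ Z' → y = 4 := by
        intro y hy; rw [hZ'] at hy; split at hy
        · exact absurd hy (by simp)
        · simpa using hy
      have hKJ : ∀ y, y ≠ 0 → y ≠ 4 → K y = J y := by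
        intro y hy0 hy4
        simp only [hK, hJ, acbI, witI]
        rw [if_neg (by simp [hy0]), if_neg (fun h => hy4 (hZ4 _ h)),
          if_neg (show y ∉ ({0} : Finset ℕ) by simp [hy0])]
      have hagree : K 1 = J 1 ∧ K 2 = J 2 ∧ K 5 = J 5 :=
        ⟨hKJ 1 (by omega) (by omega), hKJ 2 (by omega) (by omega),
         hKJ 5 (by omega) (by omega)⟩
      have hE : spE K = spE J := by
        simp [spE, spS, spB, hagree.1, hagree.2.1, hagree.2.2]
      have hDK : spD K ≠ 1 := by
        by_cases h4 : 4 ∈ W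
        · have : K 4 = some (w 4) := by
            simp only [hK, acbI]
            rw [if_neg (by simp), if_neg (by simp [hZ', h4]), if_pos h4]
          have hJ4 : J 4 = some (w 4) := by
            simp only [hJ, witI]; rw [if_neg (by simp), if_pos h4]
          rw [spD, this]
          have : spD J = w 4 := by rw [spD, hJ4]; rfl
          intro hc; exact hCJ (Or.inl (by rw [this]; simpa using hc))
        · have : K 4 = some (vs 4) := by
            simp only [hK, acbI]
            rw [if_neg (by simp), if_pos (by simp [hZ', h4])]
          rw [spD, this, a4]; simp
      have hEK : spE K ≠ 1 := by rw [hE]; intro hc; exact hCJ (Or.inr hc)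
      have hK3 : K 3 = none := by
        simp only [hK, acbI]
        rw [if_neg (by simp), if_neg ?_, if_neg h3]
        rw [hZ']; split <;> simp
      rw [show spSol K 3 = spC K from by simp [spSol], spC, hK3] at h2
      simp only [Option.getD_none] at h2
      rw [bI_eq_one] at h2
      rcases h2 with h | h
      · exact hDK h
      · exact hEK h
  · -- B = 1 is a cause, witness W = ∅, B ← 0
    refine ⟨⟨ac1 _ (by decide) (fun X hX => by simp at hX; subst hX; exact a1), ?_⟩,
      minimal 1⟩
    refine ⟨∅, fun _ => 0, fun _ => 0, Finset.empty_subset _, by decide, ?_, ?_⟩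
    · rw [satF_iff]
      simp only [BForm.eval, BForm.not]
      set J := witI {1} (fun _ => 0) ∅ (fun _ => 0) with hJ
      have hA : spA J = 1 := by simp [spA, hJ, witI]
      have hB : spB J = 0 := by simp [spB, hJ, witI]
      have hS : spS J = 1 := by simp [spS, hJ, witI]
      have hD : spD J = 0 := by rw [spD, hS]; simp [hJ, witI]; exact bI_false (by simp)
      have hE : spE J = 0 := by rw [spE, hB]; simp [hJ, witI]; exact bI_false (by simp)
      have hC : spC J = 0 := by
        rw [spC, hD, hE]; simp [hJ, witI]; exact bI_false (by simp)
      simp [spSol, hC]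
    · intro vs' hvs' W' hW' Z' hZ'
      rw [satF_iff]
      simp only [BForm.eval]
      rw [actual_uniq vs' hvs']
      have hW'e : W' = ∅ := Finset.subset_empty.1 hW'
      subst hW'e
      set K := acbI {1} (fun _ => 1) Z' vs ∅ (fun _ => 0) with hK
      by_cases h3 : 3 ∈ Z'
      · have : K 3 = some (vs 3) := by
          simp only [hK, acbI]; rw [if_neg (by simp), if_pos h3]
        simp [spSol, spC, this, a3]
      · have hK3 : K 3 = none := by
          simp only [hK, acbI]; rw [if_neg (by simp), if_neg h3]; simp
        have hE : spE K = 1 := by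
          have hB : spB K = 1 := by simp [spB, hK, acbI]
          have hS : spS K = 1 := by
            by_cases h2 : 2 ∈ Z'
            · have : K 2 = some (vs 2) := by
                simp only [hK, acbI]; rw [if_neg (by simp), if_pos h2]
              simp [spS, this, a2]
            · have : K 2 = none := by
                simp only [hK, acbI]; rw [if_neg (by simp), if_neg h2]; simp
              simp [spS, this]
          by_cases h5 : 5 ∈ Z'
          · have : K 5 = some (vs 5) := by
              simp only [hK, acbI]; rw [if_neg (by simp), if_pos h5]
            simp [spE, this, a5]
          · have : K 5 = none := by
              simp only [hK, acbI]; rw [if_neg (by simp), if_neg h5]; simp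
            rw [spE, this]; simp; exact bI_true ⟨hS, hB⟩
        have : spC K = 1 := by rw [spC, hK3]; simp; exact bI_true (Or.inr hE)
        simp [spSol, this]
  · -- S = 1 is a cause, witness W = {0}, S ← 0, A ← 0
    refine ⟨⟨ac1 _ (by decide) (fun X hX => by simp at hX; subst hX; exact a2), ?_⟩,
      minimal 2⟩
    refine ⟨{0}, fun _ => 0, fun _ => 0, by decide, by decide, ?_, ?_⟩
    · rw [satF_iff]
      simp only [BForm.eval, BForm.not]
      set J := witI {2} (fun _ => 0) {0} (fun _ => 0) with hJ
      have hA : spA J = 0 := by simp [spA, hJ, witI]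
      have hB : spB J = 1 := by simp [spB, hJ, witI]
      have hS : spS J = 0 := by simp [spS, hJ, witI]
      have hD : spD J = 0 := by rw [spD, hS, hA]; simp [hJ, witI]; exact bI_false (by simp)
      have hE : spE J = 0 := by rw [spE, hS]; simp [hJ, witI]; exact bI_false (by simp)
      have hC : spC J = 0 := by
        rw [spC, hD, hE]; simp [hJ, witI]; exact bI_false (by simp)
      simp [spSol, hC]
    · intro vs' hvs' W' hW' Z' hZ'
      rw [satF_iff]
      simp only [BForm.eval]
      rw [actual_uniq vs' hvs']
      set K := acbI {2} (fun _ => 1) Z' vs W' (fun _ => 0) with hK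
      have hW'0 : ∀ y ∈ W', y = 0 := fun y hy => by
        have := hW' hy; simpa using this
      by_cases h3 : 3 ∈ Z'
      · have : K 3 = some (vs 3) := by
          simp only [hK, acbI]; rw [if_neg (by simp), if_pos h3]
        simp [spSol, spC, this, a3]
      · have hK3 : K 3 = none := by
          simp only [hK, acbI]
          rw [if_neg (by simp), if_neg h3, if_neg (fun h => by have := hW'0 _ h; omega)]
        have hS : spS K = 1 := by simp [spS, hK, acbI]
        have hB : spB K = 1 := by
          by_cases h1 : 1 ∈ Z'
          · have : K 1 = some (vs 1) := by
              simp only [hK, acbI]; rw [if_neg (by simp), if_pos h1]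
            simp [spB, this, a1]
          · have : K 1 = none := by
              simp only [hK, acbI]
              rw [if_neg (by simp), if_neg h1, if_neg (fun h => by have := hW'0 _ h; omega)]
            simp [spB, this]
        have hE : spE K = 1 := by
          by_cases h5 : 5 ∈ Z'
          · have : K 5 = some (vs 5) := by
              simp only [hK, acbI]; rw [if_neg (by simp), if_pos h5]
            simp [spE, this, a5]
          · have : K 5 = none := by
              simp only [hK, acbI]
              rw [if_neg (by simp), if_neg h5, if_neg (fun h => by have := hW'0 _ h; omega)]
            rw [spE, this]; simp; exact bI_true ⟨hS, hB⟩
        have : spC K = 1 := by rw [spC, hK3]; simp; exact bI_true (Or.inr hE)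
        simp [spSol, this]
end

section
/- Let M and M' be extended causal models such that M' is a conservative extension of M, X⃗ = x⃗ is not an actual cause of φ in (M, u⃗) under the extended (normality-sensitive) HP definition, and (M', u⃗) respects the equations for every endogenous variable of M' not in M. Then either X⃗ = x⃗ is not an actual cause of φ in (M', u⃗), or there is a strict subset X⃗₁ of X⃗ such that X⃗₁ = x⃗₁ is an actual cause of φ in (M, u⃗), where x⃗₁ is the restriction of x⃗ to X⃗₁. -/
open Classical

/-! ### Auxiliary lemmas -/

section Aux

lemma eval_congr (φ : BForm) (v v' : ℕ → ℕ) (h : ∀ X ∈ φ.vars, v X = v' X) :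
    φ.eval v ↔ φ.eval v' := by
  induction φ with
  | prim X x => simp [BForm.eval, h X (by simp [BForm.vars])]
  | not ψ ih => simp [BForm.eval, ih (fun X hX => h X (by simpa [BForm.vars] using hX))]
  | and ψ χ ih1 ih2 =>
      simp [BForm.eval,
        ih1 (fun X hX => h X (by simp [BForm.vars]; exact Or.inl hX)),
        ih2 (fun X hX => h X (by simp [BForm.vars]; exact Or.inr hX))]

lemma recursive_intervene (M : CM) (hM : Recursive M) (I : ℕ → Option ℕ) :
    Recursive (M.intervene I) := by
  obtain ⟨ord, hinj, hord⟩ := hM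
  refine ⟨ord, hinj, fun X hX ctx g h hgh => ?_⟩
  simp only [CM.intervene]
  cases I X with
  | none => simpa using hord X hX ctx g h hgh
  | some c => simp

noncomputable def seqSol (M : CM) (ctx : ℕ → ℕ) : ℕ → (ℕ → ℕ)
  | 0 => fun _ => 0
  | k+1 => fun X => if X ∈ M.V then M.F X ctx (seqSol M ctx k) else 0

lemma seqSol_step (M : CM) (ctx : ℕ → ℕ) (ord : ℕ → ℕ)
    (hord : ∀ X ∈ M.V, ∀ ctx g h, (∀ Y ∈ M.V, ord Y < ord X → g Y = h Y) →
      M.F X ctx g = M.F X ctx h) :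
    ∀ k, ∀ X ∈ M.V, ord X < k → seqSol M ctx (k+1) X = seqSol M ctx k X := by
  intro k
  induction k with
  | zero => intro X _ h; omega
  | succ k ih =>
      intro X hX h
      show (if X ∈ M.V then M.F X ctx (seqSol M ctx (k+1)) else 0)
        = (if X ∈ M.V then M.F X ctx (seqSol M ctx k) else 0)
      simp only [if_pos hX]
      exact hord X hX ctx _ _ (fun Y hY hYX => ih Y hY (by omega))

lemma seqSol_stab (M : CM) (ctx : ℕ → ℕ) (ord : ℕ → ℕ)
    (hord : ∀ X ∈ M.V, ∀ ctx g h, (∀ Y ∈ M.V, ord Y < ord X → g Y = h Y) →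
      M.F X ctx g = M.F X ctx h) :
    ∀ j k, ∀ X ∈ M.V, ord X < k → seqSol M ctx (k+j) X = seqSol M ctx k X := by
  intro j
  induction j with
  | zero => intro k X _ _; rfl
  | succ j ih =>
      intro k X hX h
      have := seqSol_step M ctx ord hord (k+j) X hX (by omega)
      calc seqSol M ctx (k+(j+1)) X = seqSol M ctx ((k+j)+1) X := by ring_nf
        _ = seqSol M ctx (k+j) X := this
        _ = seqSol M ctx k X := ih k X hX h

lemma exists_sol (M : CM) (hM : Recursive M) (ctx : ℕ → ℕ) : ∃ v, IsSol M ctx v := by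
  obtain ⟨ord, _, hord⟩ := hM
  refine ⟨fun X => if X ∈ M.V then seqSol M ctx (ord X + 1) X else 0,
    fun X hX => ?_, fun X hX => by simp [hX]⟩
  simp only [if_pos hX]
  show seqSol M ctx (ord X + 1) X = _
  have : seqSol M ctx (ord X + 1) X = M.F X ctx (seqSol M ctx (ord X)) := by
    simp [seqSol, hX]
  rw [this]
  refine hord X hX ctx _ _ (fun Y hY hYX => ?_)
  have h1 : seqSol M ctx ((ord Y + 1) + (ord X - (ord Y + 1))) Y = seqSol M ctx (ord Y + 1) Y :=
    seqSol_stab M ctx ord hord _ _ Y hY (by omega)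
  have h2 : (ord Y + 1) + (ord X - (ord Y + 1)) = ord X := by omega
  rw [h2] at h1
  simp [h1, if_pos hY]

lemma sol_unique (M : CM) (hM : Recursive M) (ctx : ℕ → ℕ) (v w : ℕ → ℕ)
    (hv : IsSol M ctx v) (hw : IsSol M ctx w) : v = w := by
  obtain ⟨ord, _, hord⟩ := hM
  have key : ∀ n, ∀ X ∈ M.V, ord X < n → v X = w X := by
    intro n
    induction n with
    | zero => intro X _ h; omega
    | succ n ih =>
        intro X hX h
        rw [hv.1 X hX, hw.1 X hX]
        exact hord X hX ctx v w (fun Y hY hYX => ih Y hY (by omega))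
  funext X
  by_cases hX : X ∈ M.V
  · exact key (ord X + 1) X hX (by omega)
  · rw [hv.2 X hX, hw.2 X hX]

end Aux

section Agree

/-- Key lemma: solutions of `M.intervene I` and `M'.intervene I` agree on `M.V`,
for interventions supported inside `M.V`. -/
lemma agree_on_V (M M' : CM) (hM : Recursive M) (hM' : Recursive M')
    (hext : ConsExt M M') (ctx : ℕ → ℕ) (I : ℕ → Option ℕ)
    (hI : ∀ Y, Y ∉ M.V → I Y = none)
    (v v' : ℕ → ℕ) (hv : IsSol (M.intervene I) ctx v)
    (hv' : IsSol (M'.intervene I) ctx v') :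
    ∀ X ∈ M.V, v X = v' X := by
  have hsub := hext.1
  -- w* : restriction of v' to M.V
  set ws : ℕ → ℕ := fun Z => if Z ∈ M.V then v' Z else 0 with hws
  -- For each Y ∈ M.V with I Y = none, show ws satisfies M's equation at Y
  have hkey : ∀ Y ∈ M.V, I Y = none → ws Y = M.F Y ctx ws := by
    intro Y hY hIY
    -- v' is a solution of M'.intervene (doSet (M.V.erase Y) v')
    have hv'sol : IsSol (M'.intervene (doSet (M.V.erase Y) v')) ctx v' := by
      constructor
      · intro Z hZ
        simp only [CM.intervene, doSet] at *
        by_cases hZe : Z ∈ M.V.erase Y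
        · simp [hZe]
        · simp only [if_neg hZe, Option.getD]
          by_cases hZM : Z ∈ M.V
          · -- Z = Y
            have hZY : Z = Y := by
              by_contra hne
              exact hZe (Finset.mem_erase.mpr ⟨hne, hZM⟩)
            subst hZY
            have := hv'.1 Z hZ
            simpa [CM.intervene, hIY] using this
          · have := hv'.1 Z hZ
            simpa [CM.intervene, hI Z hZM] using this
      · exact fun Z hZ => hv'.2 Z hZ
    -- hence Sat M' ... Y (v' Y), hence Sat M ... Y (v' Y)
    have hSat' : Sat M' ctx (doSet (M.V.erase Y) v') Y (v' Y) := by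
      intro u hu
      have := sol_unique _ (recursive_intervene M' hM' _) ctx u v' hu hv'sol
      rw [this]
    have hSat : Sat M ctx (doSet (M.V.erase Y) v') Y (v' Y) :=
      (hext.2 ctx (v' Y) Y hY v').mpr hSat'
    -- the unique solution u of M.intervene (doSet (M.V.erase Y) v') equals ws
    obtain ⟨u, hu⟩ := exists_sol _ (recursive_intervene M hM (doSet (M.V.erase Y) v')) ctx
    have huw : u = ws := by
      funext Z
      by_cases hZM : Z ∈ M.V
      · by_cases hZe : Z ∈ M.V.erase Y
        · have := hu.1 Z hZM
          simp only [CM.intervene, doSet, if_pos hZe] at this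
          simp [hws, this, hZM]
        · have hZY : Z = Y := by
            by_contra hne
            exact hZe (Finset.mem_erase.mpr ⟨hne, hZM⟩)
          subst hZY
          simp [hws, hZM, hSat u hu]
      · simp [hws, hZM, hu.2 Z hZM]
    -- u satisfies the original equation at Y
    have := hu.1 Y hY
    simp only [CM.intervene, doSet] at this
    rw [if_neg (by simp)] at this
    rw [← huw]
    simpa [huw] using this
  -- ws is a solution of M.intervene I
  have hws_sol : IsSol (M.intervene I) ctx ws := by
    constructor
    · intro Z hZ
      simp only [CM.intervene]
      cases hIZ : I Z with
      | none => simpa using hkey Z hZ hIZ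
      | some c =>
          have hZM : Z ∈ M.V := hZ
          have := hv'.1 Z (hsub hZM)
          simp only [CM.intervene, hIZ, Option.getD] at this
          simp [hws, hZM, this]
    · intro Z hZ
      have hZM : Z ∉ M.V := hZ
      simp [hws, hZM]
  have := sol_unique _ (recursive_intervene M hM I) ctx v ws hv hws_sol
  intro X hX
  rw [this]
  simp [hws, hX]

end Agree

section Transfer

lemma satF_transfer (M M' : CM) (hM : Recursive M) (hM' : Recursive M')
    (hext : ConsExt M M') (ctx : ℕ → ℕ) (I : ℕ → Option ℕ)
    (hI : ∀ Y, Y ∉ M.V → I Y = none) (φ : BForm) (hφ : φ.vars ⊆ M.V)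
    (h : SatF M' ctx I φ) : SatF M ctx I φ := by
  intro v hv
  obtain ⟨v', hv'⟩ := exists_sol _ (recursive_intervene M' hM' I) ctx
  have hagree := agree_on_V M M' hM hM' hext ctx I hI v v' hv hv'
  exact (eval_congr φ v v' (fun X hX => hagree X (hφ hX))).mpr (h v' hv')

lemma isSol_none (M : CM) (ctx v : ℕ → ℕ) :
    IsSol (M.intervene (fun _ => none)) ctx v ↔ IsSol M ctx v := by
  constructor <;> intro h <;> exact ⟨fun X hX => h.1 X hX, fun X hX => h.2 X hX⟩

lemma witI_eq_doSet (Xs : Finset ℕ) (x' : ℕ → ℕ) (W : Finset ℕ) (w : ℕ → ℕ) :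
    witI Xs x' W w = doSet (Xs ∪ W) (fun Y => if Y ∈ Xs then x' Y else w Y) := by
  funext Y
  simp only [witI, doSet, Finset.mem_union]
  by_cases h1 : Y ∈ Xs
  · simp [h1]
  · by_cases h2 : Y ∈ W <;> simp [h1, h2]

lemma sat_not_eval (M : CM) (hM : Recursive M) (ctx : ℕ → ℕ) (I : ℕ → Option ℕ)
    (φ : BForm) (v : ℕ → ℕ) (hv : IsSol (M.intervene I) ctx v)
    (h : SatF M ctx I (BForm.not φ)) : ¬ φ.eval v := h v hv

end Transfer

section Main

lemma epre_transfer (M M' : ECM) (hM : Recursive M.toCM) (hM' : Recursive M'.toCM)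
    (hext : EConsExt M M') (ctx : ℕ → ℕ) (Xs : Finset ℕ) (hXs : Xs ⊆ M.V)
    (xv : ℕ → ℕ) (φ : BForm) (hφ : φ.vars ⊆ M.V)
    (hresp : ∀ v0 ∈ M'.V \ M.V, Respects M' ctx v0)
    (h : EPreCause M' ctx Xs xv φ) : EPreCause M ctx Xs xv φ := by
  obtain ⟨hAC1', ⟨W', w, x', hwit, hnorm⟩⟩ := h
  obtain ⟨hW'sub, hXsW', hSatNot', hACb'⟩ := hwit
  have hcons : ConsExt M.toCM M'.toCM := hext.1
  -- agreement of solutions of the unintervened models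
  have agree_base : ∀ vs vs', IsSol M.toCM ctx vs → IsSol M'.toCM ctx vs' →
      ∀ X ∈ M.V, vs X = vs' X := by
    intro vs vs' hvs hvs'
    exact agree_on_V M.toCM M'.toCM hM hM' hcons ctx (fun _ => none)
      (fun _ _ => rfl) vs vs' ((isSol_none _ ctx vs).mpr hvs)
      ((isSol_none _ ctx vs').mpr hvs')
  -- AC1 transfers
  have hAC1 : AC1 M.toCM ctx Xs xv φ := by
    intro v hv
    obtain ⟨v', hv'⟩ := exists_sol M'.toCM hM' ctx
    have hag := agree_base v v' hv hv'
    obtain ⟨h1, h2⟩ := hAC1' v' hv'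
    exact ⟨fun X hX => by rw [hag X (hXs hX)]; exact h1 X hX,
      (eval_congr φ v v' (fun X hX => hag X (hφ hX))).mpr h2⟩
  -- shrink the witness set
  set W : Finset ℕ := W' ∩ M.V with hW
  have hWsub : W ⊆ M.V := Finset.inter_subset_right
  have hWW' : W ⊆ W' := Finset.inter_subset_left
  set Iold := witI Xs x' W' w with hIold
  set Inew := witI Xs x' W w with hInew
  obtain ⟨s', hs'⟩ := exists_sol _ (recursive_intervene M'.toCM hM' Iold) ctx
  obtain ⟨su', hsu'⟩ := exists_sol M'.toCM hM' ctx
  have hge : M'.normGE s' su' := hnorm s' su' hs' hsu'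
  have hXsM' : ∀ X ∈ Xs, X ∈ M'.V ∧ X ∉ W' := by
    intro X hX
    have := hXsW' hX
    exact Finset.mem_sdiff.mp this
  -- Step A: new variables in W' take equation-determined values in s'
  have stepA : ∀ v0 ∈ W', v0 ∉ M.V → s' v0 = M'.F v0 ctx s' := by
    intro v0 hv0W' hv0M
    by_contra hne
    have hv0V' : v0 ∈ M'.V := hW'sub hv0W'
    have hdev : Deviates M'.toCM ctx v0 s' := by
      intro t ht htv0
      apply hne
      have hts : t = s' := by
        funext Z
        by_cases hZe : Z ∈ M'.V.erase v0
        · have := ht.1 Z (Finset.mem_of_mem_erase hZe)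
          simp only [CM.intervene, doSet, if_pos hZe, Option.getD_some] at this
          exact this
        · by_cases hZV : Z ∈ M'.V
          · have hZv0 : Z = v0 := by
              by_contra hne'
              exact hZe (Finset.mem_erase.mpr ⟨hne', hZV⟩)
            subst hZv0; exact htv0
          · rw [ht.2 Z hZV, hs'.2 Z hZV]
      have := ht.1 v0 hv0V'
      simp only [CM.intervene, doSet, if_neg (Finset.notMem_erase v0 M'.V),
        Option.getD] at this
      rw [hts] at this
      rw [← htv0, hts, this]
    have hworld : World M'.toCM s' := fun X hX => hs'.2 X hX
    exact hresp v0 (Finset.mem_sdiff.mpr ⟨hv0V', hv0M⟩) s' hworld hdev su' hsu' hge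
  -- Step B: s' is also a solution under the shrunk intervention
  have hs'new : IsSol (M'.toCM.intervene Inew) ctx s' := by
    refine ⟨fun Z hZ => ?_, fun Z hZ => hs'.2 Z hZ⟩
    have hZV' : Z ∈ M'.V := hZ
    by_cases hZX : Z ∈ Xs
    · have := hs'.1 Z hZV'
      simpa [CM.intervene, witI, hZX, hIold, hInew] using this
    · by_cases hZW : Z ∈ W
      · have hZW' : Z ∈ W' := hWW' hZW
        have := hs'.1 Z hZV'
        simpa [CM.intervene, witI, hZX, hZW, hZW', hIold, hInew] using this
      · simp only [CM.intervene, hInew, witI, if_neg hZX, if_neg hZW, Option.getD]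
        by_cases hZW' : Z ∈ W'
        · have hZM : Z ∉ M.V := fun hZM =>
            hZW (Finset.mem_inter.mpr ⟨hZW', hZM⟩)
          exact stepA Z hZW' hZM
        · have := hs'.1 Z hZV'
          simpa [CM.intervene, witI, hZX, hZW', hIold] using this
  -- uniqueness of the shrunk-intervention solution
  have huniq : ∀ t, IsSol (M'.toCM.intervene Inew) ctx t → t = s' := fun t ht =>
    sol_unique _ (recursive_intervene M'.toCM hM' Inew) ctx t s' ht hs'new
  -- Step C: AC2(a) holds in M' with the shrunk witness
  have hSatNot'new : SatF M'.toCM ctx Inew (BForm.not φ) := by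
    intro t ht
    rw [huniq t ht]
    exact hSatNot' s' hs'
  -- Step D: normality holds in M' with the shrunk intervention
  have hnorm'new : NormAbove M' ctx Inew := by
    intro s su hs hsu
    rw [huniq s hs]
    exact hnorm s' su hs' hsu
  -- support of Inew is inside M.V
  have hInew_supp : ∀ Y, Y ∉ M.V → Inew Y = none := by
    intro Y hY
    have h1 : Y ∉ Xs := fun h => hY (hXs h)
    have h2 : Y ∉ W := fun h => hY (hWsub h)
    simp [hInew, witI, h1, h2]
  -- Step E: transfer to M
  have hSatNot : SatF M.toCM ctx Inew (BForm.not φ) :=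
    satF_transfer M.toCM M'.toCM hM hM' hcons ctx Inew hInew_supp
      (BForm.not φ) hφ hSatNot'new
  have hnormM : NormAbove M ctx Inew := by
    have hXW : Xs ∪ W ⊆ M.V := Finset.union_subset hXs hWsub
    have := (hext.2 ctx (Xs ∪ W) hXW (fun Y => if Y ∈ Xs then x' Y else w Y)).mpr
    rw [hInew, witI_eq_doSet]
    apply this
    rw [← witI_eq_doSet]
    exact hnorm'new
  have hXsMW : Xs ⊆ M.V \ W := by
    intro X hX
    refine Finset.mem_sdiff.mpr ⟨hXs hX, fun hXW => ?_⟩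
    exact (hXsM' X hX).2 (hWW' hXW)
  -- AC2(b) transfers
  have hACb : ∀ vs, IsSol M.toCM ctx vs → ∀ W'' ⊆ W, ∀ Z' ⊆ M.V \ W,
      SatF M.toCM ctx (acbI Xs xv Z' vs W'' w) φ := by
    intro vs hvs W'' hW'' Z' hZ'
    obtain ⟨vs', hvs'⟩ := exists_sol M'.toCM hM' ctx
    have hag := agree_base vs vs' hvs hvs'
    have hZ'M : Z' ⊆ M.V := fun Y hY => (Finset.mem_sdiff.mp (hZ' hY)).1
    have hIeq : acbI Xs xv Z' vs W'' w = acbI Xs xv Z' vs' W'' w := by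
      funext Y
      simp only [acbI]
      by_cases h1 : Y ∈ Xs
      · simp [h1]
      · by_cases h2 : Y ∈ Z'
        · simp [h1, h2, hag Y (hZ'M h2)]
        · simp [h1, h2]
    have hZ'sub : Z' ⊆ M'.V \ W' := by
      intro Y hY
      refine Finset.mem_sdiff.mpr ⟨hcons.1 (hZ'M hY), fun hYW' => ?_⟩
      exact (Finset.mem_sdiff.mp (hZ' hY)).2 (Finset.mem_inter.mpr ⟨hYW', hZ'M hY⟩)
    have h' : SatF M'.toCM ctx (acbI Xs xv Z' vs' W'' w) φ :=
      hACb' vs' hvs' W'' (hW''.trans hWW') Z' hZ'sub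
    rw [hIeq]
    refine satF_transfer M.toCM M'.toCM hM hM' hcons ctx _ ?_ φ hφ h'
    intro Y hY
    have h1 : Y ∉ Xs := fun h => hY (hXs h)
    have h2 : Y ∉ Z' := fun h => hY (hZ'M h)
    have h3 : Y ∉ W'' := fun h => hY (hWsub (hW'' h))
    simp [acbI, h1, h2, h3]
  exact ⟨hAC1, W, w, x', ⟨⟨hWsub, hXsMW, hSatNot, hACb⟩, hnormM⟩⟩

end Main

lemma exists_min_cause (M : ECM) (ctx xv : ℕ → ℕ) (φ : BForm) :
    ∀ Xs : Finset ℕ, EPreCause M ctx Xs xv φ →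
      ∃ Xs₁ ⊆ Xs, EIsCause M ctx Xs₁ xv φ := by
  intro Xs
  induction Xs using Finset.strongInduction with
  | _ Xs ih =>
    intro h
    by_cases hmin : ∀ Xs' ⊂ Xs, ¬ EPreCause M ctx Xs' xv φ
    · exact ⟨Xs, subset_rfl, h, hmin⟩
    · push_neg at hmin
      obtain ⟨Xs', hsub, h'⟩ := hmin
      obtain ⟨Xs₁, h1, h2⟩ := ih Xs' hsub h'
      exact ⟨Xs₁, h1.trans hsub.subset, h2⟩

/-- stability of non-causality under conservative extensions that
respect the equations for the new variables: either X⃗ = x⃗ remains a non-cause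
in M', or some strict subset of X⃗ is already a cause in M. -/
theorem stability (M M' : ECM) (hM : Recursive M.toCM) (hM' : Recursive M'.toCM)
    (hext : EConsExt M M') (ctx : ℕ → ℕ) (Xs : Finset ℕ) (hXs : Xs ⊆ M.V)
    (xv : ℕ → ℕ) (φ : BForm) (hφ : φ.vars ⊆ M.V)
    (hnc : ¬ EIsCause M ctx Xs xv φ)
    (hresp : ∀ v0 ∈ M'.V \ M.V, Respects M' ctx v0) :
    ¬ EIsCause M' ctx Xs xv φ ∨ ∃ Xs' ⊂ Xs, EIsCause M ctx Xs' xv φ := by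
  by_cases hpc : ∃ Xs'' ⊆ Xs, EPreCause M ctx Xs'' xv φ
  · obtain ⟨Xs'', hsub, hpre⟩ := hpc
    obtain ⟨Xs₁, h1, h2⟩ := exists_min_cause M ctx xv φ Xs'' hpre
    by_cases hXe : Xs₁ = Xs
    · exact absurd (hXe ▸ h2) hnc
    · exact Or.inr ⟨Xs₁, lt_of_le_of_ne (h1.trans hsub) hXe, h2⟩
  · left
    intro hc
    exact hpc ⟨Xs, subset_rfl,
      epre_transfer M M' hM hM' hext ctx Xs hXs xv φ hφ hresp hc.1⟩
end
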